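/- arXiv:2110.04355 — 3 statements merged into one kernel-verified Lean document; each statement's English description precedes it below -/
import Mathlib

section
/- Descent lemma for the ℓ1 merit function: if f : ℝⁿ → ℝ has L_f-Lipschitz gradient and each c_i : ℝⁿ → ℝ (i = 1,…,m) has (L_c)_i-Lipschitz gradient, then for φ(x) = f(x) + π‖c(x)‖₁ with π > 0, and for all x, d ∈ ℝⁿ and α ≥ 0: φ(x + αd) ≤ φ(x) + α g(x)ᵀd + π(‖c(x) + αJ(x)d‖₁ − ‖c(x)‖₁) + (1/2)(L_f + π‖L_c‖₁) α²‖d‖². -/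
open scoped RealInnerProductSpace

lemma key {n : ℕ} (h : EuclideanSpace ℝ (Fin n) → ℝ)
    (g : EuclideanSpace ℝ (Fin n) → EuclideanSpace ℝ (Fin n)) (L : ℝ)
    (hh : ∀ x, HasGradientAt h (g x) x)
    (hL : ∀ x y, ‖g x - g y‖ ≤ L * ‖x - y‖)
    (x d : EuclideanSpace ℝ (Fin n)) (α : ℝ) (hα : 0 ≤ α) :
    h (x + α • d) ≤ h x + α * ⟪g x, d⟫ + L / 2 * α ^ 2 * ‖d‖ ^ 2 := by
  set ψ : ℝ → ℝ := fun t => h (x + t • d) with hψ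
  have hline : ∀ t : ℝ, HasDerivAt (fun t : ℝ => x + t • d) d t := by
    intro t
    simpa using ((hasDerivAt_id t).smul_const d).const_add x
  have hψ' : ∀ t : ℝ, HasDerivAt ψ ⟪g (x + t • d), d⟫ t := by
    intro t
    have := ((hh (x + t • d)).hasFDerivAt).comp_hasDerivAt t (hline t)
    exact this
  set B : ℝ → ℝ := fun t => h x + t * ⟪g x, d⟫ + L / 2 * t ^ 2 * ‖d‖ ^ 2 - ψ t with hB
  have hB' : ∀ t : ℝ, HasDerivAt B (⟪g x, d⟫ + L * t * ‖d‖ ^ 2 - ⟪g (x + t • d), d⟫) t := by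
    intro t
    have h1 : HasDerivAt (fun t : ℝ => h x + t * ⟪g x, d⟫ + L / 2 * t ^ 2 * ‖d‖ ^ 2)
        (⟪g x, d⟫ + L * t * ‖d‖ ^ 2) t := by
      have := (((hasDerivAt_id t).mul_const ⟪g x, d⟫).const_add (h x)).add
        ((((hasDerivAt_pow 2 t).const_mul (L / 2)).mul_const (‖d‖ ^ 2)))
      exact this.congr_deriv (by simp only [Nat.cast_ofNat, show (2:ℕ) - 1 = 1 from rfl, pow_one]; ring)
    exact h1.sub (hψ' t)
  have hnn : ∀ t ∈ Set.Icc (0:ℝ) α,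
      0 ≤ ⟪g x, d⟫ + L * t * ‖d‖ ^ 2 - ⟪g (x + t • d), d⟫ := by
    intro t ht
    have h1 : ⟪g (x + t • d), d⟫ - ⟪g x, d⟫ = ⟪g (x + t • d) - g x, d⟫ := by
      rw [inner_sub_left]
    have h2 : ⟪g (x + t • d) - g x, d⟫ ≤ ‖g (x + t • d) - g x‖ * ‖d‖ :=
      real_inner_le_norm _ _
    have h3 : ‖g (x + t • d) - g x‖ ≤ L * ‖t • d‖ := by
      have := hL (x + t • d) x
      simpa using this
    have h4 : ‖t • d‖ = t * ‖d‖ := by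
      rw [norm_smul, Real.norm_eq_abs, abs_of_nonneg ht.1]
    have h5 := mul_le_mul_of_nonneg_right h3 (norm_nonneg d)
    rw [h4] at h5
    have h6 : L * (t * ‖d‖) * ‖d‖ = L * t * ‖d‖ ^ 2 := by ring
    linarith
  have hmono : MonotoneOn B (Set.Icc 0 α) := by
    apply monotoneOn_of_deriv_nonneg (convex_Icc 0 α)
    · exact (continuous_iff_continuousAt.mpr fun t => (hB' t).continuousAt).continuousOn
    · intro t _
      exact ((hB' t).differentiableAt).differentiableWithinAt
    · intro t ht
      rw [interior_Icc] at ht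
      rw [(hB' t).deriv]
      exact hnn t (Set.mem_Icc_of_Ioo ht)
  have h0 : B 0 ≤ B α := hmono (Set.left_mem_Icc.mpr hα) (Set.right_mem_Icc.mpr hα) hα
  have hB0 : B 0 = 0 := by simp [hB, hψ]
  rw [hB0] at h0
  simp only [hB] at h0
  linarith

/-- descent lemma for the ℓ1 merit function: if `f` has `L_f`-Lipschitz
gradient `g` and each component `c i` has `(L_c)_i`-Lipschitz gradient `gc i`, then for
`φ(x) = f(x) + π ‖c(x)‖₁` (with `π > 0`), all `x, d` and `α ≥ 0`:
`φ(x+αd) ≤ φ(x) + α⟪g(x),d⟫ + π(‖c(x)+αJ(x)d‖₁ − ‖c(x)‖₁) + ½(L_f + π‖L_c‖₁)α²‖d‖²`,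
where the `i`-th row of `J(x)` is `∇c_i(x)ᵀ`, i.e. `(J(x)d)_i = ⟪gc i x, d⟫`. -/
theorem stmt7 {n m : ℕ}
    (f : EuclideanSpace ℝ (Fin n) → ℝ) (g : EuclideanSpace ℝ (Fin n) → EuclideanSpace ℝ (Fin n))
    (c : Fin m → EuclideanSpace ℝ (Fin n) → ℝ)
    (gc : Fin m → EuclideanSpace ℝ (Fin n) → EuclideanSpace ℝ (Fin n))
    (Lf : ℝ) (Lc : Fin m → ℝ) (π : ℝ) (hπ : 0 < π)
    (hf : ∀ x, HasGradientAt f (g x) x)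
    (hLf : ∀ x y, ‖g x - g y‖ ≤ Lf * ‖x - y‖)
    (hc : ∀ i x, HasGradientAt (c i) (gc i x) x)
    (hLc : ∀ i x y, ‖gc i x - gc i y‖ ≤ Lc i * ‖x - y‖)
    (φ : EuclideanSpace ℝ (Fin n) → ℝ)
    (hφ : ∀ x, φ x = f x + π * ∑ i, |c i x|)
    (x d : EuclideanSpace ℝ (Fin n)) (α : ℝ) (hα : 0 ≤ α) :
    φ (x + α • d) ≤ φ x + α * ⟪g x, d⟫
      + π * ((∑ i, |c i x + α * ⟪gc i x, d⟫|) - ∑ i, |c i x|)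
      + 1 / 2 * (Lf + π * ∑ i, |Lc i|) * α ^ 2 * ‖d‖ ^ 2 := by
  have hfbd := key f g Lf hf hLf x d α hα
  have hcbd : ∀ i, |c i (x + α • d)| ≤ |c i x + α * ⟪gc i x, d⟫| + |Lc i| / 2 * α ^ 2 * ‖d‖ ^ 2 := by
    intro i
    have hup := key (c i) (gc i) (Lc i) (hc i) (hLc i) x d α hα
    have hgneg : ∀ y, HasGradientAt (fun y => -(c i y)) (-(gc i y)) y := by
      intro y
      have hfd := ((hc i y).hasFDerivAt).neg
      rw [hasGradientAt_iff_hasFDerivAt, map_neg]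
      exact hfd
    have hLneg : ∀ a b : EuclideanSpace ℝ (Fin n), ‖-gc i a - -gc i b‖ ≤ Lc i * ‖a - b‖ := by
      intro a b
      have heq : -gc i a - -gc i b = -(gc i a - gc i b) := by abel
      rw [heq, norm_neg]
      exact hLc i a b
    have hdn := key (fun y => -(c i y)) (fun y => -(gc i y)) (Lc i)
      hgneg hLneg x d α hα
    have habs : |c i (x + α • d) - (c i x + α * ⟪gc i x, d⟫)| ≤ Lc i / 2 * α ^ 2 * ‖d‖ ^ 2 := by
      rw [abs_le]
      constructor
      · simp only [inner_neg_left] at hdn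
        nlinarith
      · linarith
    have hLabs : Lc i / 2 * α ^ 2 * ‖d‖ ^ 2 ≤ |Lc i| / 2 * α ^ 2 * ‖d‖ ^ 2 := by
      have := le_abs_self (Lc i)
      nlinarith [sq_nonneg α, sq_nonneg ‖d‖, sq_nonneg (α * ‖d‖)]
    calc |c i (x + α • d)| ≤ |c i x + α * ⟪gc i x, d⟫| + |c i (x + α • d) - (c i x + α * ⟪gc i x, d⟫)| := by
          have := abs_sub_abs_le_abs_sub (c i (x + α • d)) (c i x + α * ⟪gc i x, d⟫)
          linarith
      _ ≤ _ := by linarith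
  have hsum : ∑ i, |c i (x + α • d)| ≤
      ∑ i, (|c i x + α * ⟪gc i x, d⟫| + |Lc i| / 2 * α ^ 2 * ‖d‖ ^ 2) :=
    Finset.sum_le_sum fun i _ => hcbd i
  rw [Finset.sum_add_distrib] at hsum
  rw [hφ, hφ]
  have hπ' := hπ.le
  have := mul_le_mul_of_nonneg_left hsum hπ'
  have hre : ∑ i : Fin m, |Lc i| / 2 * α ^ 2 * ‖d‖ ^ 2 = (∑ i, |Lc i|) / 2 * α ^ 2 * ‖d‖ ^ 2 := by
    rw [Finset.sum_div, ← Finset.sum_mul, ← Finset.sum_mul]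
  rw [hre] at this
  nlinarith [this, hfbd]
end

section
/- Multiplier bound implies model descent: let d = −(1/β)P̃g̃ − J̃ᵀ(J̃J̃ᵀ)^{-1}c̃ with β > 0 and all quantities exact (ε_f = ε_c = ε_g = ε_J = 0, so g̃ = g, c̃ = c, J̃ = J, P̃ = P). If the penalty parameter satisfies π ≥ (1/(1−τ))‖(JJᵀ)^{-1}Jg‖_∞ for some τ ∈ (0,1), then ℓ(x; d) ≤ −(1/β)gᵀPg − τπ‖c‖₁, where ℓ(x; d) = gᵀd + π‖c + Jd‖₁ − π‖c‖₁. -/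
open Matrix

/-- ℓ1 norm of a finite real vector. -/
def l1 {m : ℕ} (v : Fin m → ℝ) : ℝ := ∑ i, |v i|
/-- ℓ∞ (max) norm of a finite real vector. -/
noncomputable def linf {m : ℕ} (v : Fin m → ℝ) : ℝ := ⨆ i, |v i|

lemma l1_nonneg {m : ℕ} (v : Fin m → ℝ) : 0 ≤ l1 v :=
  Finset.sum_nonneg fun i _ => abs_nonneg _

lemma abs_le_linf {m : ℕ} (v : Fin m → ℝ) (i : Fin m) : |v i| ≤ linf v := by
  have := le_ciSup (f := fun j => |v j|) (Set.Finite.bddAbove (Set.finite_range _)) i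
  simpa [linf] using this

lemma abs_dot_le {m : ℕ} (v c : Fin m → ℝ) : |v ⬝ᵥ c| ≤ linf v * l1 c := by
  calc |v ⬝ᵥ c| = |∑ i, v i * c i| := rfl
    _ ≤ ∑ i, |v i * c i| := Finset.abs_sum_le_sum_abs _ _
    _ ≤ ∑ i, linf v * |c i| := by
        refine Finset.sum_le_sum fun i _ => ?_
        rw [abs_mul]
        exact mul_le_mul_of_nonneg_right (abs_le_linf v i) (abs_nonneg _)
    _ = linf v * l1 c := by rw [l1, Finset.mul_sum]

/-- multiplier bound implies model descent, exact case: with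
`d = −(1/β)Pg − Jᵀ(JJᵀ)⁻¹c`, `P = I − Jᵀ(JJᵀ)⁻¹J`, `β > 0`, if the penalty parameter
satisfies `π ≥ (1/(1−τ))‖(JJᵀ)⁻¹Jg‖_∞` with `τ ∈ (0,1)`, then
`ℓ(x;d) = gᵀd + π‖c + Jd‖₁ − π‖c‖₁ ≤ −(1/β) gᵀPg − τπ‖c‖₁`. -/
theorem stmt10 {m n : ℕ} (hmn : m < n) (J : Matrix (Fin m) (Fin n) ℝ)
    (hrank : J.rank = m) (hdet : IsUnit (J * Jᵀ).det)
    (g : Fin n → ℝ) (c : Fin m → ℝ) (β τ π : ℝ)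
    (hβ : 0 < β) (hτ : τ ∈ Set.Ioo (0 : ℝ) 1)
    (P : Matrix (Fin n) (Fin n) ℝ) (hP : P = 1 - Jᵀ * (J * Jᵀ)⁻¹ * J)
    (d : Fin n → ℝ)
    (hd : d = -((1 / β) • (P *ᵥ g)) - (Jᵀ * (J * Jᵀ)⁻¹) *ᵥ c)
    (hπ : π ≥ (1 / (1 - τ)) * linf (((J * Jᵀ)⁻¹ * J) *ᵥ g)) :
    g ⬝ᵥ d + π * l1 (c + J *ᵥ d) - π * l1 c
      ≤ -(1 / β) * (g ⬝ᵥ (P *ᵥ g)) - τ * π * l1 c := by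
  obtain ⟨hτ0, hτ1⟩ := hτ
  have h1τ : 0 < 1 - τ := by linarith
  set A := (J * Jᵀ)⁻¹ with hA
  have hJJA : J * Jᵀ * A = 1 := Matrix.mul_nonsing_inv _ hdet
  have hJP : J * P = 0 := by
    rw [hP, Matrix.mul_sub, Matrix.mul_one, ← Matrix.mul_assoc, ← Matrix.mul_assoc,
      hJJA, Matrix.one_mul, sub_self]
  have hJd : J *ᵥ d = -c := by
    have h1 : J * (Jᵀ * A) = 1 := by rw [← Matrix.mul_assoc, hJJA]
    simp [hd, Matrix.mulVec_sub, Matrix.mulVec_neg, Matrix.mulVec_smul, Matrix.mulVec_mulVec, hJP, h1]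
  have hc0 : c + J *ᵥ d = 0 := by rw [hJd]; simp
  have hAt : Aᵀ = A := by
    rw [hA, Matrix.transpose_nonsing_inv, Matrix.transpose_mul, Matrix.transpose_transpose]
  have hAsymm : (Jᵀ * A)ᵀ = A * J := by
    rw [Matrix.transpose_mul, Matrix.transpose_transpose, hAt]
  have hgd : g ⬝ᵥ d = -(1 / β) * (g ⬝ᵥ (P *ᵥ g)) - ((A * J) *ᵥ g) ⬝ᵥ c := by
    rw [hd, dotProduct_sub, dotProduct_neg, dotProduct_smul]
    have h2 : g ⬝ᵥ ((Jᵀ * A) *ᵥ c) = ((A * J) *ᵥ g) ⬝ᵥ c := by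
      rw [Matrix.dotProduct_mulVec, ← hAsymm, Matrix.mulVec_transpose]
    rw [h2]
    simp [smul_eq_mul]
  have hl10 : l1 (c + J *ᵥ d) = 0 := by
    rw [hc0]; simp [l1]
  rw [hgd, hl10, mul_zero]
  have hlinf : linf ((A * J) *ᵥ g) ≤ (1 - τ) * π := by
    rw [ge_iff_le, div_mul_eq_mul_div, one_mul, div_le_iff₀ h1τ] at hπ
    linarith [hπ]
  have hbound : -(((A * J) *ᵥ g) ⬝ᵥ c) ≤ (1 - τ) * π * l1 c := by
    calc -(((A * J) *ᵥ g) ⬝ᵥ c) ≤ |((A * J) *ᵥ g) ⬝ᵥ c| := neg_le_abs _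
      _ ≤ linf ((A * J) *ᵥ g) * l1 c := abs_dot_le _ _
      _ ≤ (1 - τ) * π * l1 c := mul_le_mul_of_nonneg_right hlinf (l1_nonneg c)
  nlinarith [hbound]
end

section
/- Stabilization of the penalty parameter: let (λ_k) be a bounded sequence of nonnegative reals and define π_k recursively by π_k = π_{k−1} if π_{k−1} ≥ λ_k/(1−τ), and π_k = 2λ_k/(1−τ) otherwise, with π_{−1} > 0 and τ ∈ (0,1). Then (π_k) is nondecreasing and there exist k₀ ∈ ℕ and π̄ > 0 such that π_k = π̄ for all k ≥ k₀. -/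
/-- stabilization of the penalty parameter: let `(λ_k)` be a bounded
sequence of nonnegative reals, `τ ∈ (0,1)`, `π₋₁ > 0`, and define
`π_k = π_{k−1}` if `π_{k−1} ≥ λ_k/(1−τ)`, and `π_k = 2λ_k/(1−τ)` otherwise.
Then `(π_k)` is nondecreasing and eventually constant equal to some `π̄ > 0`. -/
theorem stmt11 (τ : ℝ) (hτ : τ ∈ Set.Ioo (0 : ℝ) 1)
    (lam : ℕ → ℝ) (hlam : ∀ k, 0 ≤ lam k) (M : ℝ) (hM : ∀ k, lam k ≤ M)
    (πinit : ℝ) (hπinit : 0 < πinit)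
    (π : ℕ → ℝ)
    (hπ0 : π 0 = if πinit ≥ lam 0 / (1 - τ) then πinit else 2 * lam 0 / (1 - τ))
    (hπ : ∀ k, π (k + 1) =
      if π k ≥ lam (k + 1) / (1 - τ) then π k else 2 * lam (k + 1) / (1 - τ)) :
    Monotone π ∧ ∃ k₀ : ℕ, ∃ πbar : ℝ, 0 < πbar ∧ ∀ k ≥ k₀, π k = πbar := by
  obtain ⟨hτ0, hτ1⟩ := hτ
  have h1 : (0:ℝ) < 1 - τ := by linarith
  -- positivity of π 0
  have hπ0pos : 0 < π 0 := by
    rw [hπ0]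
    split_ifs with h
    · exact hπinit
    · push_neg at h
      rw [mul_div_assoc]
      linarith
  -- monotone
  have hmono : Monotone π := by
    apply monotone_nat_of_le_succ
    intro k
    rw [hπ k]
    split_ifs with h
    · exact le_refl _
    · push_neg at h
      have hd : 0 ≤ lam (k+1) / (1 - τ) := div_nonneg (hlam _) h1.le
      rw [mul_div_assoc]
      linarith
  -- bound
  set B : ℝ := max πinit (2 * M / (1 - τ)) with hB
  have hMB : 2 * M / (1 - τ) ≤ B := le_max_right _ _
  have hbound : ∀ k, π k ≤ B := by
    intro k
    induction k with
    | zero =>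
      rw [hπ0]
      split_ifs with h
      · exact le_max_left _ _
      · refine le_trans ?_ hMB
        gcongr
        exact hM 0
    | succ n ih =>
      rw [hπ n]
      split_ifs with h
      · exact ih
      · refine le_trans ?_ hMB
        gcongr
        exact hM (n+1)
  -- doubling on change
  have hdouble : ∀ j, π (j+1) ≠ π j → 2 * π j ≤ π (j+1) := by
    intro j hne
    rw [hπ j] at hne ⊢
    split_ifs at hne ⊢ with h
    · exact absurd rfl hne
    · push_neg at h
      rw [mul_div_assoc]
      linarith
  -- eventually constant
  have hstab : ∃ k₀, ∀ j ≥ k₀, π (j+1) = π j := by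
    by_contra hc
    push_neg at hc
    have grow : ∀ n : ℕ, ∃ k, 2 ^ n * π 0 ≤ π k := by
      intro n
      induction n with
      | zero => exact ⟨0, by simp⟩
      | succ n ih =>
        obtain ⟨k, hk⟩ := ih
        obtain ⟨j, hjk, hne⟩ := hc k
        refine ⟨j + 1, ?_⟩
        have h2 := hdouble j hne
        have h3 : π k ≤ π j := hmono hjk
        have : 2 ^ (n+1) * π 0 = 2 * (2 ^ n * π 0) := by ring
        rw [this]
        linarith
    obtain ⟨n, hn⟩ := pow_unbounded_of_one_lt (B / π 0) (by norm_num : (1:ℝ) < 2)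
    obtain ⟨k, hk⟩ := grow n
    have : B < 2 ^ n * π 0 := by
      rw [div_lt_iff₀ hπ0pos] at hn
      linarith
    linarith [hbound k]
  obtain ⟨k₀, hk₀⟩ := hstab
  refine ⟨hmono, k₀, π k₀, lt_of_lt_of_le hπ0pos (hmono (Nat.zero_le _)), ?_⟩
  intro k hk
  induction k with
  | zero => simp_all
  | succ n ih =>
    rcases Nat.lt_or_ge n k₀ with h | h
    · have : k₀ = n + 1 := le_antisymm hk h
      rw [this]
    · rw [hk₀ n h, ih h]
end
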